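/- Sorted-trimming by color preserves the convex hull of regular values: Let values x_1 ≥ x_2 ≥ … ≥ x_n be assigned to nodes n_1,…,n_n with colors Δ(n_p), and suppose there are at least three distinct colors among {n_1,…,n_n} and at most one color is 'adversarial' (any subset of nodes sharing one fixed color may hold arbitrary values, all other nodes are 'regular'). Define m = min{p : Δ(n_p) ≠ Δ(n_1)} and M = max{p : Δ(n_p) ≠ Δ(n_n)}. Then m ≤ M, and every value x_p with m ≤ p ≤ M satisfies min over regular nodes of their values ≤ x_p ≤ max over regular nodes of their values. -/
import Mathlib


theorem stmt12 {Γ : Type*} [DecidableEq Γ]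
    (n : ℕ) (hn : 3 ≤ n)
    (x : Fin n → ℝ) (hx : Antitone x)   -- values sorted in descending order
    (Δc : Fin n → Γ) (cstar : Γ)        -- coloring; `cstar` is the adversarial color
    -- at least three distinct colors are present
    (hdiv : ∃ u v w : Fin n, Δc u ≠ Δc v ∧ Δc v ≠ Δc w ∧ Δc u ≠ Δc w)
    -- `m` is the smallest index whose color differs from that of the top node
    (m : Fin n)
    (hm₁ : Δc m ≠ Δc ⟨0, by omega⟩)
    (hm₂ : ∀ p : Fin n, p < m → Δc p = Δc ⟨0, by omega⟩)
    -- `M` is the largest index whose color differs from that of the bottom node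
    (M : Fin n)
    (hM₁ : Δc M ≠ Δc ⟨n - 1, by omega⟩)
    (hM₂ : ∀ p : Fin n, M < p → Δc p = Δc ⟨n - 1, by omega⟩) :
    m ≤ M ∧
    ∀ p : Fin n, m ≤ p → p ≤ M →
      (∃ a : Fin n, Δc a ≠ cstar ∧ a ≤ m ∧ x p ≤ x a) ∧
      (∃ b : Fin n, Δc b ≠ cstar ∧ M ≤ b ∧ x b ≤ x p) := by
  have hzero : (0:ℕ) < n := by omega
  have hmM : m ≤ M := by
    by_contra h
    push_neg at h
    have hall : ∀ q : Fin n, Δc q = Δc ⟨0, hzero⟩ ∨ Δc q = Δc ⟨n-1, by omega⟩ := by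
      intro q
      rcases lt_or_ge q m with hq | hq
      · exact Or.inl (hm₂ q hq)
      · exact Or.inr (hM₂ q (lt_of_lt_of_le h hq))
    obtain ⟨u, v, w, h1, h2, h3⟩ := hdiv
    rcases hall u with hu|hu <;> rcases hall v with hv|hv <;> rcases hall w with hw|hw <;>
      simp_all
  refine ⟨hmM, fun p hmp hpM => ⟨?_, ?_⟩⟩
  · by_cases h : Δc ⟨0, hzero⟩ = cstar
    · exact ⟨m, fun hc => hm₁ (hc.trans h.symm), le_refl m, hx hmp⟩
    · exact ⟨⟨0, hzero⟩, h, Fin.le_def.mpr (Nat.zero_le _),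
        hx (le_trans (Fin.le_def.mpr (Nat.zero_le _)) hmp)⟩
  · by_cases h : Δc ⟨n-1, by omega⟩ = cstar
    · exact ⟨M, fun hc => hM₁ (hc.trans h.symm), le_refl M, hx hpM⟩
    · refine ⟨⟨n-1, by omega⟩, h, ?_, hx ?_⟩
      · exact Fin.le_def.mpr (show (M:ℕ) ≤ n-1 by have := M.isLt; omega)
      · exact le_trans hpM (Fin.le_def.mpr (show (M:ℕ) ≤ n-1 by have := M.isLt; omega))
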